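/- For every integer n ≥ 50, 288π(-3 + π√(24(n-1)-1)) / ((24(n-1)-1)^(3/2) · (-6 + π√(24(n-1)-1))²) < 1/(2n²) + 1/n^(5/2). -/

import Mathlib

open Real in
private lemma aux_stmt8 (N x t : ℝ) (hN : 50 ≤ N) (hx2 : x ^ 2 = 24 * N - 25)
    (ht2 : t ^ 2 = N) (hxpos : 0 < x) (htpos : 0 < t) :
    288 * π * (-3 + π * x) / (x ^ 3 * (-6 + π * x) ^ 2) <
      1 / (2 * N ^ 2) + 1 / (N ^ 2 * t) := by
  have hNpos : (0:ℝ) < N := by linarith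
  have hx34 : (34:ℝ) ≤ x := by nlinarith
  have ht7 : (7:ℝ) ≤ t := by nlinarith
  have hpi1 : (3.141592:ℝ) < π := Real.pi_gt_d6
  have hpi2 : π < 3.141593 := Real.pi_lt_d6
  have hpx : (100:ℝ) < π * x := by nlinarith
  have hx2t : x ^ 2 = 24 * t ^ 2 - 25 := by rw [hx2, ht2]
  have hx_lo : (479:ℝ)/100 * t ≤ x := by nlinarith
  have hkey : 288 * π * (π * x - 3) * x ^ 2 < (288 * x + 1000) * (π * x - 6) ^ 2 := by
    nlinarith [hx34, hpi1, hpi2, sq_nonneg (x - 34),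
      mul_nonneg (sub_nonneg.2 hx34) (sub_nonneg.2 hx34)]
  have hden : (0:ℝ) < x ^ 3 * (-6 + π * x) ^ 2 := by
    have h6 : (0:ℝ) < -6 + π * x := by linarith
    positivity
  have hA : 288 * π * (-3 + π * x) / (x ^ 3 * (-6 + π * x) ^ 2) < (288 * x + 1000) / x ^ 5 := by
    rw [div_lt_div_iff₀ hden (by positivity)]
    calc 288 * π * (-3 + π * x) * x ^ 5 = (288 * π * (π * x - 3) * x ^ 2) * x ^ 3 := by ring
      _ < ((288 * x + 1000) * (π * x - 6) ^ 2) * x ^ 3 :=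
          mul_lt_mul_of_pos_right hkey (by positivity)
      _ = (288 * x + 1000) * (x ^ 3 * (-6 + π * x) ^ 2) := by ring
  have hx4 : x ^ 4 = (24 * t ^ 2 - 25) ^ 2 := by
    have h : x ^ 4 = (x ^ 2) ^ 2 := by ring
    rw [h, hx2t]
  have hN2 : N ^ 2 = t ^ 4 := by rw [← ht2]; ring
  have hB1 : 288 / x ^ 4 < 1 / (2 * N ^ 2) + (9/50) * (1 / (N ^ 2 * t)) := by
    have e1 : (9:ℝ)/50 * (1 / (N ^ 2 * t)) = (9/50) / (N ^ 2 * t) := by ring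
    have hcore : 576 * t ^ 4 * t < (t + 9/25) * x ^ 4 := by
      rw [hx4]
      nlinarith [mul_nonneg (mul_nonneg (sub_nonneg.2 ht7) (sub_nonneg.2 ht7)) (sub_nonneg.2 ht7),
        mul_nonneg (mul_nonneg (mul_nonneg (sub_nonneg.2 ht7) (sub_nonneg.2 ht7)) (sub_nonneg.2 ht7)) (sub_nonneg.2 ht7),
        sub_nonneg.2 ht7]
    have hcoreN : 576 * N ^ 2 * t < (t + 9/25) * x ^ 4 := by rw [hN2]; exact hcore
    have hc2 := mul_lt_mul_of_pos_left hcoreN (by positivity : (0:ℝ) < N ^ 2)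
    rw [e1, div_add_div _ _ (by positivity) (by positivity),
      div_lt_div_iff₀ (by positivity) (by positivity)]
    nlinarith [hc2]
  have hB2 : 1000 / x ^ 5 < (4/5) * (1 / (N ^ 2 * t)) := by
    have e1 : (4:ℝ)/5 * (1 / (N ^ 2 * t)) = (4/5) / (N ^ 2 * t) := by ring
    rw [e1, div_lt_div_iff₀ (by positivity) (by positivity), hN2]
    have h4 : 529 * t ^ 4 ≤ x ^ 4 := by nlinarith [hx4, ht7]
    have h5 : 529 * t ^ 4 * ((479:ℝ)/100 * t) ≤ x ^ 4 * x := by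
      apply mul_le_mul h4 hx_lo (by positivity) (by positivity)
    linarith [h5, pow_pos htpos 5]
  have hB3 : (288 * x + 1000) / x ^ 5 = 288 / x ^ 4 + 1000 / x ^ 5 := by
    field_simp
  have hupos : 0 < 1 / (N ^ 2 * t) := by positivity
  calc 288 * π * (-3 + π * x) / (x ^ 3 * (-6 + π * x) ^ 2)
      < (288 * x + 1000) / x ^ 5 := hA
    _ = 288 / x ^ 4 + 1000 / x ^ 5 := hB3
    _ < 1 / (2 * N ^ 2) + (9/50) * (1 / (N ^ 2 * t)) + (4/5) * (1 / (N ^ 2 * t)) := by linarith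
    _ ≤ 1 / (2 * N ^ 2) + 1 / (N ^ 2 * t) := by linarith

open Real in
theorem stmt_8 (n : ℕ) (hn : 50 ≤ n) :
    288 * π * (-3 + π * Real.sqrt (24 * ((n : ℝ) - 1) - 1)) /
      ((24 * ((n : ℝ) - 1) - 1) ^ ((3:ℝ)/2) *
        (-6 + π * Real.sqrt (24 * ((n : ℝ) - 1) - 1)) ^ 2) <
      1 / (2 * (n : ℝ) ^ 2) + 1 / (n : ℝ) ^ ((5:ℝ)/2) := by
  have hn' : (50:ℝ) ≤ (n:ℝ) := by exact_mod_cast hn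
  have hNpos : (0:ℝ) < (n:ℝ) := by linarith
  have hmpos : (0:ℝ) < 24 * ((n:ℝ) - 1) - 1 := by linarith
  have hx2 : (Real.sqrt (24 * ((n:ℝ) - 1) - 1)) ^ 2 = 24 * (n:ℝ) - 25 := by
    rw [Real.sq_sqrt hmpos.le]; ring
  have ht2 : (Real.sqrt (n:ℝ)) ^ 2 = (n:ℝ) := Real.sq_sqrt hNpos.le
  have hxpos : 0 < Real.sqrt (24 * ((n:ℝ) - 1) - 1) := Real.sqrt_pos.mpr hmpos
  have htpos : 0 < Real.sqrt (n:ℝ) := Real.sqrt_pos.mpr hNpos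
  have hm32 : (24 * ((n:ℝ) - 1) - 1) ^ ((3:ℝ)/2) = (Real.sqrt (24 * ((n:ℝ) - 1) - 1)) ^ 3 := by
    rw [show (3:ℝ)/2 = (1/2) * 3 by ring, Real.rpow_mul hmpos.le, ← Real.sqrt_eq_rpow,
      show ((3:ℝ)) = ((3:ℕ):ℝ) by norm_num, Real.rpow_natCast]
  have hn52 : (n:ℝ) ^ ((5:ℝ)/2) = (n:ℝ) ^ 2 * Real.sqrt (n:ℝ) := by
    rw [show (5:ℝ)/2 = 2 + 1/2 by ring, Real.rpow_add hNpos, ← Real.sqrt_eq_rpow,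
      show ((2:ℝ)) = ((2:ℕ):ℝ) by norm_num, Real.rpow_natCast]
  rw [hm32, hn52]
  exact aux_stmt8 (n:ℝ) _ _ hn' hx2 ht2 hxpos htpos
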